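/- Exact recovery under zero error: with f(x) = Ã f'(x) + h(x) where Ã = L^{-T} S^{-1} S' L'^{T} and h(x) = L^{-T} S^{-1} ε(x) as in the weighted decomposition lemma, if the two models' conditional distributions are equal (p_{f,g} = p_{f',g'} pointwise), then ε(x) = 0 for all x, S = S', and f(x) = L^{-T} L'^{T} f'(x), recovering the linear identifiability relation. -/

import Mathlib

open MeasureTheory ProbabilityTheory Matrix

/-- The softmax conditional model `p_{f,g}(y|x)`. -/
noncomputable def softmax {X Y : Type*} [Fintype Y] {M : ℕ}
    (f : X → Fin M → ℝ) (g : Y → Fin M → ℝ) (x : X) (y : Y) : ℝ :=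
  Real.exp (∑ i, f x i * g y i) / ∑ y' : Y, Real.exp (∑ i, f x i * g y' i)

lemma softmax_log_ratio {X Y : Type*} [Fintype Y] {M : ℕ}
    (f : X → Fin M → ℝ) (g : Y → Fin M → ℝ) (x : X) (y y₀ : Y) :
    Real.log (softmax f g x y) - Real.log (softmax f g x y₀) =
      ∑ i, f x i * (g y i - g y₀ i) := by
  have hZ : (0:ℝ) < ∑ y' : Y, Real.exp (∑ i, f x i * g y' i) := by
    have : Nonempty Y := ⟨y₀⟩
    exact Finset.sum_pos (fun y' _ => Real.exp_pos _) Finset.univ_nonempty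
  have hlog : ∀ y' : Y, Real.log (softmax f g x y') =
      (∑ i, f x i * g y' i) - Real.log (∑ y'' : Y, Real.exp (∑ i, f x i * g y'' i)) := by
    intro y'
    rw [softmax, Real.log_div (Real.exp_ne_zero _) hZ.ne', Real.log_exp]
  rw [hlog y, hlog y₀]
  ring_nf
  rw [← Finset.sum_sub_distrib]

theorem exact_recovery_under_zero_error
    {X Y : Type*} [MeasurableSpace X] (μ : Measure X) [IsProbabilityMeasure μ]
    [Fintype Y] {M : ℕ}
    (f f' : X → Fin M → ℝ) (g g' : Y → Fin M → ℝ)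
    (y₀ : Y) (ys : Fin M → Y)
    (L L' : Matrix (Fin M) (Fin M) ℝ)
    (hL : ∀ i j, L i j = g (ys j) i - g y₀ i)
    (hL' : ∀ i j, L' i j = g' (ys j) i - g' y₀ i)
    (hLdet : IsUnit L.det) (hL'det : IsUnit L'.det)
    (ψ ψ' : Fin M → ℝ)
    (hψ : ∀ i, ψ i = Real.sqrt (variance
      (fun x => Real.log (softmax f g x (ys i)) - Real.log (softmax f g x y₀)) μ))
    (hψ' : ∀ i, ψ' i = Real.sqrt (variance
      (fun x => Real.log (softmax f' g' x (ys i)) - Real.log (softmax f' g' x y₀)) μ))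
    (hψpos : ∀ i, 0 < ψ i) (hψ'pos : ∀ i, 0 < ψ' i)
    (ε : X → Fin M → ℝ)
    (hε : ∀ x i, ε x i =
      (Real.log (softmax f g x (ys i)) - Real.log (softmax f g x y₀)) / ψ i -
      (Real.log (softmax f' g' x (ys i)) - Real.log (softmax f' g' x y₀)) / ψ' i)
    (heq : ∀ x y, softmax f g x y = softmax f' g' x y) :
    (∀ x i, ε x i = 0) ∧ (∀ i, ψ i = ψ' i) ∧
    (∀ x, f x = ((Lᵀ)⁻¹ * L'ᵀ).mulVec (f' x)) := by
  have hψeq : ∀ i, ψ i = ψ' i := by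
    intro i
    rw [hψ i, hψ' i]
    congr 1
    apply congrArg (fun φ => variance φ μ)
    funext x
    rw [heq, heq]
  refine ⟨?_, hψeq, ?_⟩
  · intro x i
    rw [hε x i, heq, heq, hψeq i, sub_self]
  · intro x
    have hkey : Lᵀ.mulVec (f x) = L'ᵀ.mulVec (f' x) := by
      funext j
      simp only [Matrix.mulVec, dotProduct, Matrix.transpose_apply]
      have h1 : ∑ i, L i j * f x i = ∑ i, f x i * (g (ys j) i - g y₀ i) := by
        congr 1; ext i; rw [hL]; ring
      have h2 : ∑ i, L' i j * f' x i = ∑ i, f' x i * (g' (ys j) i - g' y₀ i) := by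
        congr 1; ext i; rw [hL']; ring
      rw [h1, h2, ← softmax_log_ratio f g x (ys j) y₀,
        ← softmax_log_ratio f' g' x (ys j) y₀, heq, heq]
    have hLT : IsUnit Lᵀ.det := by rwa [Matrix.det_transpose]
    calc f x = (1 : Matrix (Fin M) (Fin M) ℝ).mulVec (f x) := by
            rw [Matrix.one_mulVec]
      _ = ((Lᵀ)⁻¹ * Lᵀ).mulVec (f x) := by rw [Matrix.nonsing_inv_mul _ hLT]
      _ = (Lᵀ)⁻¹.mulVec (Lᵀ.mulVec (f x)) := by rw [← Matrix.mulVec_mulVec]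
      _ = (Lᵀ)⁻¹.mulVec (L'ᵀ.mulVec (f' x)) := by rw [hkey]
      _ = ((Lᵀ)⁻¹ * L'ᵀ).mulVec (f' x) := by rw [Matrix.mulVec_mulVec]
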